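/- The kill rule and the revive rule are confluent with each other: the only overlap of kill: kill(f) \ G^F ⇔ f ∈ F | true and revive: kill(f) \ rem(G^{F_c})^F ⇔ f ∈ F | G^{F_c} is on the kept kill(f) constraint, and the resulting critical pair is trivially joinable. -/
import Mathlib


variable {C J : Type*} [DecidableEq C] [DecidableEq J]

/-- Annotated constraints of CHR with justifications, including the reserved
`rem` and `kill` constraints. `user c F` is a (non-reserved) constraint `c`
annotated with justification set `F`; `rem c Fc F` remembers the removed
constraint `c^{Fc}` and is itself annotated with `F`; `kill f` requests
logical retraction of justification `f`. -/
inductive AC (C J : Type*) where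
  | user : C → Finset J → AC C J
  | rem : C → Finset J → Finset J → AC C J
  | kill : J → AC C J
deriving DecidableEq

/-- The kill rule: `kill(f) \ G^F ⇔ f ∈ F | true`, for non-reserved `G`. -/
def KillStep (S T : Multiset (AC C J)) : Prop :=
  ∃ (f : J) (c : C) (F : Finset J) (G : Multiset (AC C J)),
    f ∈ F ∧ S = AC.kill f ::ₘ AC.user c F ::ₘ G ∧ T = AC.kill f ::ₘ G

/-- The revive rule: `kill(f) \ rem(G^{F_c})^F ⇔ f ∈ F | G^{F_c}`. -/
def ReviveStep (S T : Multiset (AC C J)) : Prop :=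
  ∃ (f : J) (c : C) (Fc F : Finset J) (G : Multiset (AC C J)),
    f ∈ F ∧ S = AC.kill f ::ₘ AC.rem c Fc F ::ₘ G ∧
      T = AC.kill f ::ₘ AC.user c Fc ::ₘ G

/-- A state contains at most one `kill(f)` constraint per justification `f`. -/
def AtMostOneKill (S : Multiset (AC C J)) : Prop :=
  ∀ f : J, S.count (AC.kill f) ≤ 1

/-- The kill and revive rules are confluent with each other: any critical pair
arising from applying the kill rule and the revive rule to a common overlap
state (with at most one `kill(f)` per justification) is joinable; indeed it is
trivially joinable since the only overlap is on the kept `kill(f)` constraint,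
which neither rule removes. -/
theorem kill_confluent_with_revive (S T₁ T₂ : Multiset (AC C J))
    (hS : AtMostOneKill S) (h₁ : KillStep S T₁) (h₂ : ReviveStep S T₂) :
    ∃ U₁ U₂ : Multiset (AC C J),
      Relation.ReflTransGen (fun a b => KillStep a b ∨ ReviveStep a b) T₁ U₁ ∧
      Relation.ReflTransGen (fun a b => KillStep a b ∨ ReviveStep a b) T₂ U₂ ∧
      U₁ = U₂ := by
  obtain ⟨f, c, F, G, hfF, hS1, hT1⟩ := h₁
  obtain ⟨f', c', Fc, F', G', hfF', hS2, hT2⟩ := h₂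
  -- the rem constraint is in G
  have hremG : AC.rem c' Fc F' ∈ G := by
    have h : (AC.rem c' Fc F' : AC C J) ∈ S := by rw [hS2]; simp
    rw [hS1] at h; simpa using h
  have huserG' : AC.user c F ∈ G' := by
    have h : (AC.user c F : AC C J) ∈ S := by rw [hS1]; simp
    rw [hS2] at h; simpa using h
  have hkill'T1 : AC.kill f' ∈ T₁ := by
    by_cases h : f' = f
    · subst h; rw [hT1]; simp
    · have hh : (AC.kill f' : AC C J) ∈ S := by rw [hS2]; simp
      rw [hS1] at hh; rw [hT1]
      simp only [Multiset.mem_cons] at hh ⊢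
      rcases hh with hh | hh | hh <;> simp_all
  have hkillT2 : AC.kill f ∈ T₂ := by
    by_cases h : f = f'
    · subst h; rw [hT2]; simp
    · have hh : (AC.kill f : AC C J) ∈ S := by rw [hS1]; simp
      rw [hS2] at hh; rw [hT2]
      simp only [Multiset.mem_cons] at hh ⊢
      rcases hh with hh | hh | hh <;> simp_all
  have hremT1 : AC.rem c' Fc F' ∈ (T₁.erase (AC.kill f')) := by
    rw [Multiset.mem_erase_of_ne (by simp)]
    rw [hT1]; exact Multiset.mem_cons_of_mem hremG
  have huserT2 : AC.user c F ∈ (T₂.erase (AC.kill f)) := by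
    rw [Multiset.mem_erase_of_ne (by simp)]
    rw [hT2]
    exact Multiset.mem_cons_of_mem (Multiset.mem_cons_of_mem huserG')
  set H₁ := (T₁.erase (AC.kill f')).erase (AC.rem c' Fc F') with hH1
  set H₂ := (T₂.erase (AC.kill f)).erase (AC.user c F) with hH2
  have hT1' : T₁ = AC.kill f' ::ₘ AC.rem c' Fc F' ::ₘ H₁ := by
    rw [hH1, Multiset.cons_erase hremT1, Multiset.cons_erase hkill'T1]
  have hT2' : T₂ = AC.kill f ::ₘ AC.user c F ::ₘ H₂ := by
    rw [hH2, Multiset.cons_erase huserT2, Multiset.cons_erase hkillT2]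
  refine ⟨AC.kill f' ::ₘ AC.user c' Fc ::ₘ H₁, AC.kill f ::ₘ H₂,
    Relation.ReflTransGen.single (Or.inr ⟨f', c', Fc, F', H₁, hfF', hT1', rfl⟩),
    Relation.ReflTransGen.single (Or.inl ⟨f, c, F, H₂, hfF, hT2', rfl⟩), ?_⟩
  -- count argument
  ext a
  have c1 := congrArg (Multiset.count a) hS1
  have c2 := congrArg (Multiset.count a) hS2
  have c3 := congrArg (Multiset.count a) hT1
  have c4 := congrArg (Multiset.count a) hT2
  have c5 := congrArg (Multiset.count a) hT1'
  have c6 := congrArg (Multiset.count a) hT2'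
  simp only [Multiset.count_cons] at c1 c2 c3 c4 c5 c6 ⊢
  split_ifs at c1 c2 c3 c4 c5 c6 ⊢ <;> omega
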